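/- For every matrix A ∈ ℝ^{m×n}, the tropical rank of A equals the largest cardinality of a tropically independent family of rows of A. -/

import Mathlib

noncomputable section

/-- The field of generalized power series over ℝ with complex coefficients. -/
abbrev K : Type := HahnSeries ℝ ℂ

open Classical in
/-- The degree of an element of `K`: the least exponent of its support, `⊤` for `0`. -/
noncomputable def Kdeg (a : K) : WithTop ℝ :=
  if a = 0 then ⊤ else ((HahnSeries.order a : ℝ) : WithTop ℝ)

/-- A square real matrix is tropically non-singular if the minimum in the tropical
permanent is attained by exactly one permutation. -/
def TropNonsing {k : ℕ} (S : Matrix (Fin k) (Fin k) ℝ) : Prop :=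
  ∃! σ : Equiv.Perm (Fin k), ∀ τ : Equiv.Perm (Fin k),
    (∑ i, S i (σ i)) ≤ ∑ i, S i (τ i)

/-- The tropical rank: the largest size of a tropically non-singular square submatrix. -/
noncomputable def tropRank {m n : ℕ} (A : Matrix (Fin m) (Fin n) ℝ) : ℕ :=
  sSup {r : ℕ | ∃ (ρ : Fin r → Fin m) (c : Fin r → Fin n),
    Function.Injective ρ ∧ Function.Injective c ∧ TropNonsing (A.submatrix ρ c)}

/-- A matrix over `K` is a lift of a real matrix if degrees of entries match. -/
def IsLift {m n : ℕ} (F : Matrix (Fin m) (Fin n) K) (B : Matrix (Fin m) (Fin n) ℝ) : Prop :=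
  ∀ i j, Kdeg (F i j) = (B i j : WithTop ℝ)

/-- The Kapranov rank: the smallest rank over `K` of a lift. -/
noncomputable def kapRank {m n : ℕ} (B : Matrix (Fin m) (Fin n) ℝ) : ℕ :=
  sInf {r : ℕ | ∃ F : Matrix (Fin m) (Fin n) K, IsLift F B ∧ F.rank = r}

/-- The tuple `lam` realizes the tropical dependence of the rows of `A`. -/
def Realizes {m n : ℕ} (lam : Fin m → WithTop ℝ) (A : Matrix (Fin m) (Fin n) ℝ) : Prop :=
  (∃ τ, lam τ ≠ ⊤) ∧
  ∀ k : Fin n, ∃ τ₁ τ₂ : Fin m, τ₁ ≠ τ₂ ∧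
    (∀ τ, lam τ₁ + (A τ₁ k : WithTop ℝ) ≤ lam τ + (A τ k : WithTop ℝ)) ∧
    (∀ τ, lam τ₂ + (A τ₂ k : WithTop ℝ) ≤ lam τ + (A τ k : WithTop ℝ))

open Classical in
/-- The pattern of a real matrix, with entries in `{0, ∞} ⊆ ℝ ∪ {∞}`. -/
noncomputable def pat {m n : ℕ} (A : Matrix (Fin m) (Fin n) ℝ) (u : Fin m) (v : Fin n) :
    WithTop ℝ :=
  if ∀ i, A u v ≤ A i v then 0 else ⊤

/-- The support of the `j`-th column of the pattern of `A`. -/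
def colSupp {m n : ℕ} (A : Matrix (Fin m) (Fin n) ℝ) (j : Fin n) : Set (Fin m) :=
  {u | ∀ i, A u j ≤ A i j}



open Finset

theorem permApplyInvSelf {α : Type*} (σ : Equiv.Perm α) (x : α) : σ (σ⁻¹ x) = x :=
  σ.apply_symm_apply x

theorem permInvApplySelf {α : Type*} (σ : Equiv.Perm α) (x : α) : σ⁻¹ (σ x) = x :=
  σ.symm_apply_apply x

/-- ties: min of `lam + w` attained at two indices -/
def ColTies {d : ℕ} (w lam : Fin d → ℝ) : Prop :=
  ∃ i₁ i₂ : Fin d, i₁ ≠ i₂ ∧ (∀ i, lam i₁ + w i₁ ≤ lam i + w i) ∧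
    (∀ i, lam i₂ + w i₂ ≤ lam i + w i)

section CR
variable {d : ℕ} (X : Matrix (Fin d) (Fin (d+1)) ℝ)

/-- injections avoiding t -/
def avoidSet (t : Fin (d+1)) : Finset (Fin d → Fin (d+1)) :=
  univ.filter (fun φ => Function.Injective φ ∧ ∀ a, φ a ≠ t)

lemma avoidSet_nonempty (t : Fin (d+1)) : (avoidSet (d := d) t).Nonempty := by
  refine ⟨t.succAbove, ?_⟩
  simp only [avoidSet, mem_filter, mem_univ, true_and]
  exact ⟨Fin.succAbove_right_injective, fun a => Fin.succAbove_ne t a⟩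

noncomputable def muCR (t : Fin (d+1)) : ℝ :=
  (avoidSet t).inf' (avoidSet_nonempty t) (fun φ => ∑ a, X a (φ a))

lemma cramer_ties : ∀ i : Fin d, ∃ t₁ t₂ : Fin (d+1), t₁ ≠ t₂ ∧
    (∀ t, muCR X t₁ + X i t₁ ≤ muCR X t + X i t) ∧
    (∀ t, muCR X t₂ + X i t₂ ≤ muCR X t + X i t) := by
  intro i
  obtain ⟨t₀, -, ht₀⟩ := Finset.exists_min_image univ (fun t => muCR X t + X i t) ⟨0, mem_univ _⟩
  have ht₀' : ∀ t, muCR X t₀ + X i t₀ ≤ muCR X t + X i t := fun t => ht₀ t (mem_univ t)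
  obtain ⟨φ₀, hφ₀mem, hφ₀⟩ := Finset.exists_mem_eq_inf' (avoidSet_nonempty t₀)
    (fun φ => ∑ a, X a (φ a))
  simp only [avoidSet, mem_filter, mem_univ, true_and] at hφ₀mem
  obtain ⟨hinj, havoid⟩ := hφ₀mem
  set t₂ := φ₀ i with ht₂
  have ht₂ne : t₂ ≠ t₀ := havoid i
  refine ⟨t₀, t₂, Ne.symm ht₂ne, ht₀', fun t => le_trans ?_ (ht₀' t)⟩
  -- show muCR X t₂ + X i t₂ ≤ muCR X t₀ + X i t₀
  set φ' := Function.update φ₀ i t₀ with hφ'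
  have hval : ∀ a, φ' a = if a = i then t₀ else φ₀ a := by
    intro a
    rcases eq_or_ne a i with rfl | ha
    · simp [hφ']
    · simp [hφ', Function.update_of_ne ha, ha]
  have hφ'mem : φ' ∈ avoidSet t₂ := by
    simp only [avoidSet, mem_filter, mem_univ, true_and]
    constructor
    · intro a b hab
      rw [hval a, hval b] at hab
      rcases eq_or_ne a i with ha | ha <;> rcases eq_or_ne b i with hb | hb
      · exact ha.trans hb.symm
      · rw [if_pos ha, if_neg hb] at hab
        exact absurd hab.symm (havoid b)
      · rw [if_neg ha, if_pos hb] at hab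
        exact absurd hab (havoid a)
      · rw [if_neg ha, if_neg hb] at hab
        exact hinj hab
    · intro a
      rw [hval a]
      rcases eq_or_ne a i with ha | ha
      · rw [if_pos ha]
        exact fun h => ht₂ne h.symm
      · rw [if_neg ha]
        exact fun h => ha (hinj h)
  have hsum : (∑ a, X a (φ' a)) = (∑ a, X a (φ₀ a)) - X i t₂ + X i t₀ := by
    have : (∑ a, X a (φ' a)) - (∑ a, X a (φ₀ a)) = X i t₀ - X i t₂ := by
      rw [← Finset.sum_sub_distrib]
      have hsupp : ∀ a ∈ (univ : Finset (Fin d)), a ∉ ({i} : Finset (Fin d)) →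
          X a (φ' a) - X a (φ₀ a) = 0 := by
        intro a _ ha
        simp only [mem_singleton] at ha
        simp [hφ', Function.update_of_ne ha]
      rw [← Finset.sum_subset (subset_univ ({i} : Finset (Fin d))) hsupp]
      simp [hφ', ht₂]
    linarith
  have h1 : muCR X t₂ ≤ (∑ a, X a (φ' a)) := Finset.inf'_le _ hφ'mem
  have h2 : (∑ a, X a (φ₀ a)) = muCR X t₀ := hφ₀.symm
  rw [hsum, h2] at h1
  linarith

end CR

section TC

/-- tropical convexity of hyperplane sets -/
lemma colTies_combo {d N : ℕ} (w : Fin d → ℝ) (z : Fin N → Fin d → ℝ) (cf : Fin N → ℝ)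
    (T : Finset (Fin N)) (hT : T.Nonempty) (hz : ∀ t ∈ T, ColTies w (z t))
    (y : Fin d → ℝ) (hy : ∀ i, y i = T.inf' hT (fun t => cf t + z t i)) :
    ColTies w y := by
  classical
  -- choice of tie indices for each t
  choose I₁ I₂ hne h1 h2 using fun t (ht : t ∈ T) => hz t ht
  -- minimize q t := cf t + z t (I₁ t) + w (I₁ t)
  obtain ⟨t₀, ht₀T, ht₀⟩ := Finset.exists_min_image T
    (fun t => if ht : t ∈ T then cf t + z t (I₁ t ht) + w (I₁ t ht) else 0) hT
  set i₁ := I₁ t₀ ht₀T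
  set i₂ := I₂ t₀ ht₀T
  have key : ∀ (j : Fin d), (∀ i, z t₀ j + w j ≤ z t₀ i + w i) → ∀ i, y j + w j ≤ y i + w i := by
    intro j hj i
    have hyj : y j ≤ cf t₀ + z t₀ j := by
      rw [hy j]; exact Finset.inf'_le _ ht₀T
    -- y i + w i attained at some t'
    obtain ⟨t', ht'T, ht'⟩ := Finset.exists_mem_eq_inf' hT (fun t => cf t + z t i)
    have hyi : y i = cf t' + z t' i := by rw [hy i]; exact ht'
    have hq : cf t₀ + z t₀ (I₁ t₀ ht₀T) + w (I₁ t₀ ht₀T) ≤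
        cf t' + z t' (I₁ t' ht'T) + w (I₁ t' ht'T) := by
      have := ht₀ t' ht'T
      simpa [ht₀T, ht'T] using this
    have hj' : z t₀ j + w j ≤ z t₀ (I₁ t₀ ht₀T) + w (I₁ t₀ ht₀T) := hj _
    have ht'tie : z t' (I₁ t' ht'T) + w (I₁ t' ht'T) ≤ z t' i + w i := h1 t' ht'T i
    calc y j + w j ≤ cf t₀ + z t₀ j + w j := by linarith
    _ ≤ cf t₀ + z t₀ (I₁ t₀ ht₀T) + w (I₁ t₀ ht₀T) := by linarith
    _ ≤ cf t' + z t' (I₁ t' ht'T) + w (I₁ t' ht'T) := hq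
    _ ≤ cf t' + z t' i + w i := by linarith
    _ = y i + w i := by rw [hyi]
  exact ⟨i₁, i₂, hne t₀ ht₀T, key i₁ (h1 t₀ ht₀T), key i₂ (h2 t₀ ht₀T)⟩

end TC
section Helly

open Finset

lemma helly_aux {d n : ℕ} (hd : 1 ≤ d) (w : Fin n → Fin d → ℝ) :
    ∀ (N : ℕ) (F : Finset (Fin n)), F.card ≤ N → d ≤ F.card →
    (∀ G ⊆ F, G.card = d → ∃ lam : Fin d → ℝ, ∀ k ∈ G, ColTies (w k) lam) →
    ∃ lam : Fin d → ℝ, ∀ k ∈ F, ColTies (w k) lam := by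
  intro N
  induction N with
  | zero =>
    intro F hF hdF hsub
    have : F.card = d := le_antisymm (by omega) hdF
    exact hsub F Finset.Subset.rfl this
  | succ N IH =>
    intro F hFN hdF hsub
    rcases eq_or_lt_of_le hdF with heq | hlt
    · exact hsub F Finset.Subset.rfl heq.symm
    · -- F.card ≥ d + 1
      have hz' : ∀ t ∈ F, ∃ lam : Fin d → ℝ, ∀ k ∈ F.erase t, ColTies (w k) lam := by
        intro t ht
        refine IH (F.erase t) ?_ ?_ ?_
        · rw [Finset.card_erase_of_mem ht]; omega
        · rw [Finset.card_erase_of_mem ht]; omega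
        · intro G hG hGcard
          exact hsub G (hG.trans (Finset.erase_subset _ _)) hGcard
      classical
      choose! zfun hzfun using hz'
      obtain ⟨W, hWF, hWcard⟩ := Finset.exists_subset_card_eq (show d + 1 ≤ F.card by omega)
      set e := W.orderIsoOfFin hWcard with he
      set X : Matrix (Fin d) (Fin (d+1)) ℝ := fun i s => zfun ((e s : { x // x ∈ W }) : Fin n) i
        with hX
      set y : Fin d → ℝ :=
        fun i => (Finset.univ : Finset (Fin (d+1))).inf' Finset.univ_nonempty
          (fun s => muCR X s + X i s) with hy
      have hesF : ∀ s : Fin (d+1), ((e s : { x // x ∈ W }) : Fin n) ∈ F :=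
        fun s => hWF (e s).2
      refine ⟨y, fun k hk => ?_⟩
      by_cases hkW : k ∈ W
      · set s₀ := e.symm ⟨k, hkW⟩ with hs₀
        have hT : ((Finset.univ : Finset (Fin (d+1))).erase s₀).Nonempty := by
          have hnt : Nontrivial (Fin (d+1)) := by
            rw [Fin.nontrivial_iff_two_le]; omega
          obtain ⟨s, hs⟩ := exists_ne s₀
          exact ⟨s, Finset.mem_erase.mpr ⟨hs, Finset.mem_univ _⟩⟩
        have hz : ∀ s ∈ (Finset.univ : Finset (Fin (d+1))).erase s₀,
            ColTies (w k) (fun i => X i s) := by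
          intro s hs
          have hne : k ≠ ((e s : { x // x ∈ W }) : Fin n) := by
            intro hkk
            apply Finset.ne_of_mem_erase hs
            have h2 : (⟨k, hkW⟩ : { x // x ∈ W }) = e s := Subtype.ext hkk
            rw [hs₀, h2, OrderIso.symm_apply_apply]
          exact hzfun _ (hesF s) k (Finset.mem_erase.mpr ⟨hne, hk⟩)
        have hyT : ∀ i, y i = ((Finset.univ : Finset (Fin (d+1))).erase s₀).inf' hT
            (fun s => muCR X s + X i s) := by
          intro i
          obtain ⟨t₁, t₂, ht12, h1, h2⟩ := cramer_ties X i
          have hpick : ∃ t', t' ≠ s₀ ∧ ∀ s, muCR X t' + X i t' ≤ muCR X s + X i s := by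
            rcases eq_or_ne t₁ s₀ with rfl | h
            · exact ⟨t₂, fun hh => ht12 hh.symm, h2⟩
            · exact ⟨t₁, h, h1⟩
          obtain ⟨t', ht's₀, ht'min⟩ := hpick
          refine le_antisymm ?_ ?_
          · exact Finset.le_inf' _ _ (fun s _ => Finset.inf'_le _ (Finset.mem_univ s))
          · exact le_trans
              (Finset.inf'_le _ (Finset.mem_erase.mpr ⟨ht's₀, Finset.mem_univ _⟩))
              (Finset.le_inf' _ _ (fun s _ => ht'min s))
        exact colTies_combo (w k) (fun s i => X i s) (muCR X) _ hT hz y hyT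
      · have hz : ∀ s ∈ (Finset.univ : Finset (Fin (d+1))),
            ColTies (w k) (fun i => X i s) := by
          intro s _
          have hne : k ≠ ((e s : { x // x ∈ W }) : Fin n) := by
            intro hkk
            exact hkW (hkk ▸ (e s).2)
          exact hzfun _ (hesF s) k (Finset.mem_erase.mpr ⟨hne, hk⟩)
        exact colTies_combo (w k) (fun s i => X i s) (muCR X) _ Finset.univ_nonempty hz y
          (fun i => rfl)

lemma helly {d n : ℕ} (hd : 1 ≤ d) (w : Fin n → Fin d → ℝ) (hdn : d ≤ n)
    (hsub : ∀ G : Finset (Fin n), G.card = d →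
      ∃ lam : Fin d → ℝ, ∀ k ∈ G, ColTies (w k) lam) :
    ∃ lam : Fin d → ℝ, ∀ k, ColTies (w k) lam := by
  obtain ⟨lam, hlam⟩ := helly_aux hd w n Finset.univ (by simp) (by simpa using hdn)
    (fun G _ hG => hsub G hG)
  exact ⟨lam, fun k => hlam k (Finset.mem_univ k)⟩

end Helly
section Square

open Finset Equiv

/-- For a tropically singular square matrix there is a (finite) vector lam
realizing ties in every column. -/
lemma square_ties {r : ℕ} (S : Matrix (Fin r) (Fin r) ℝ)
    (hns : ¬ (∃! σ : Equiv.Perm (Fin r), ∀ τ : Equiv.Perm (Fin r),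
      (∑ i, S i (σ i)) ≤ ∑ i, S i (τ i))) :
    ∃ lam : Fin r → ℝ, ∀ k : Fin r, ColTies (fun i => S i k) lam := by
  classical
  obtain ⟨σ₀, -, hσ₀⟩ := Finset.exists_min_image (univ : Finset (Equiv.Perm (Fin r)))
    (fun σ => ∑ i, S i (σ i)) ⟨1, mem_univ 1⟩
  have hP0 : ∀ τ : Equiv.Perm (Fin r), (∑ i, S i (σ₀ i)) ≤ ∑ i, S i (τ i) :=
    fun τ => hσ₀ τ (mem_univ τ)
  have hex : ∃ σ₁ : Equiv.Perm (Fin r), (∀ τ : Equiv.Perm (Fin r),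
      (∑ i, S i (σ₁ i)) ≤ ∑ i, S i (τ i)) ∧ σ₁ ≠ σ₀ := by
    by_contra hcon
    push_neg at hcon
    exact hns ⟨σ₀, hP0, fun y hy => hcon y hy⟩
  obtain ⟨σ₁, hP1, hne⟩ := hex
  have hj : ∃ j, σ₀⁻¹ j ≠ σ₁⁻¹ j := by
    by_contra hcon
    push_neg at hcon
    apply hne
    have : σ₁⁻¹ = σ₀⁻¹ := Equiv.ext fun j => (hcon j).symm
    calc σ₁ = (σ₁⁻¹)⁻¹ := by simp
    _ = (σ₀⁻¹)⁻¹ := by rw [this]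
    _ = σ₀ := by simp
  obtain ⟨j₀, hj₀⟩ := hj
  set Pj : Fin r → Finset (Equiv.Perm (Fin r)) :=
    fun i => univ.filter (fun σ => σ i = j₀) with hPj
  have hPjne : ∀ i, (Pj i).Nonempty := by
    intro i
    refine ⟨σ₀ * Equiv.swap i (σ₀⁻¹ j₀), ?_⟩
    simp only [hPj, mem_filter, mem_univ, true_and, Equiv.Perm.mul_apply,
      Equiv.swap_apply_left, permApplyInvSelf]
  set g : Fin r → ℝ := fun i => (Pj i).inf' (hPjne i) (fun σ => ∑ t, S t (σ t)) with hg
  set lam : Fin r → ℝ := fun i => g i - S i j₀ with hlam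
  have hmem_iff : ∀ i σ, σ ∈ Pj i ↔ σ i = j₀ := by
    intro i σ; simp [hPj]
  have hg_le : ∀ (i : Fin r) (σ : Equiv.Perm (Fin r)), σ i = j₀ → g i ≤ ∑ t, S t (σ t) := by
    intro i σ hσ
    exact Finset.inf'_le _ ((hmem_iff i σ).mpr hσ)
  have hg_ge : ∀ i, (∑ t, S t (σ₀ t)) ≤ g i := by
    intro i
    obtain ⟨σ, hσmem, hσeq⟩ := Finset.exists_mem_eq_inf' (hPjne i) (fun σ => ∑ t, S t (σ t))
    have h2 : g i = ∑ t, S t (σ t) := hσeq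
    rw [h2]; exact hP0 σ
  refine ⟨lam, fun k => ?_⟩
  have hlamval : ∀ i, lam i + S i j₀ = g i := by intro i; simp [hlam]
  by_cases hk : k = j₀
  · subst hk
    refine ⟨σ₀⁻¹ k, σ₁⁻¹ k, hj₀, fun i => ?_, fun i => ?_⟩
    · rw [hlamval, hlamval]
      exact le_trans (hg_le _ σ₀ (permApplyInvSelf σ₀ k)) (hg_ge i)
    · rw [hlamval, hlamval]
      refine le_trans (hg_le _ σ₁ (permApplyInvSelf σ₁ k)) ?_
      exact le_trans (hP1 σ₀) (hg_ge i)
  · -- k ≠ j₀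
    obtain ⟨i₁, -, hmin⟩ := Finset.exists_min_image (univ : Finset (Fin r))
      (fun i => lam i + S i k) ⟨k, mem_univ k⟩
    have hmin' : ∀ i, lam i₁ + S i₁ k ≤ lam i + S i k := fun i => hmin i (mem_univ i)
    obtain ⟨σ, hσmem, hσeq'⟩ := Finset.exists_mem_eq_inf' (hPjne i₁) (fun σ => ∑ t, S t (σ t))
    have hσeq : g i₁ = ∑ t, S t (σ t) := hσeq'
    rw [hmem_iff] at hσmem
    set i₂ := σ⁻¹ k with hi₂
    have hne12 : i₁ ≠ i₂ := by
      intro h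
      apply hk
      rw [h, hi₂] at hσmem
      rw [← hσmem, permApplyInvSelf]
    have hσi₂ : σ i₂ = k := permApplyInvSelf σ k
    set σ' := σ * Equiv.swap i₁ i₂ with hσ'
    have hσ'i₂ : σ' i₂ = j₀ := by
      rw [hσ', Equiv.Perm.mul_apply, Equiv.swap_apply_right, hσmem]
    have hσ'i₁ : σ' i₁ = k := by
      rw [hσ', Equiv.Perm.mul_apply, Equiv.swap_apply_left, hσi₂]
    have hσ'other : ∀ t, t ≠ i₁ → t ≠ i₂ → σ' t = σ t := by
      intro t h1 h2
      rw [hσ', Equiv.Perm.mul_apply, Equiv.swap_apply_of_ne_of_ne h1 h2]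
    have hsum : (∑ t, S t (σ' t)) = (∑ t, S t (σ t)) - S i₁ j₀ - S i₂ k + S i₁ k + S i₂ j₀ := by
      have hdiff : (∑ t, S t (σ' t)) - (∑ t, S t (σ t))
          = ∑ t ∈ ({i₁, i₂} : Finset (Fin r)), (S t (σ' t) - S t (σ t)) := by
        rw [← Finset.sum_sub_distrib]
        refine (Finset.sum_subset (subset_univ _) ?_).symm
        intro t _ ht
        simp only [mem_insert, mem_singleton] at ht
        push_neg at ht
        rw [hσ'other t ht.1 ht.2, sub_self]
      rw [Finset.sum_pair hne12, hσ'i₁, hσ'i₂, hσmem, hσi₂] at hdiff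
      linarith
    have hkey : lam i₂ + S i₂ k ≤ lam i₁ + S i₁ k := by
      have h1 : g i₂ ≤ ∑ t, S t (σ' t) := hg_le i₂ σ' hσ'i₂
      rw [hsum, ← hσeq] at h1
      simp only [hlam]
      linarith
    exact ⟨i₁, i₂, hne12, hmin', fun i => le_trans hkey (hmin' i)⟩

end Square
section Cycle

open Finset Equiv Function

lemma not_nonsing_of_ties {r : ℕ} (hr : 0 < r) (S : Matrix (Fin r) (Fin r) ℝ)
    (lam : Fin r → ℝ)
    (h : ∀ k : Fin r, ∃ τ₁ τ₂ : Fin r, τ₁ ≠ τ₂ ∧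
      (∀ τ, lam τ₁ + S τ₁ k ≤ lam τ + S τ k) ∧
      (∀ τ, lam τ₂ + S τ₂ k ≤ lam τ + S τ k)) :
    ¬ (∃! σ : Equiv.Perm (Fin r), ∀ τ : Equiv.Perm (Fin r),
      (∑ i, S i (σ i)) ≤ ∑ i, S i (τ i)) := by
  classical
  rintro ⟨σ₀, hσ₀, huniq⟩
  choose τ₁ τ₂ hτne hτ1 hτ2 using h
  set f : Fin r → Fin r := fun k => if σ₀⁻¹ k = τ₁ k then τ₂ k else τ₁ k with hfdef
  have hf1 : ∀ k, f k ≠ σ₀⁻¹ k := by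
    intro k
    show (if σ₀⁻¹ k = τ₁ k then τ₂ k else τ₁ k) ≠ σ₀⁻¹ k
    rcases eq_or_ne (σ₀⁻¹ k) (τ₁ k) with he | he
    · rw [if_pos he, he]
      exact fun hh => (hτne k) hh.symm
    · rw [if_neg he]
      exact fun hh => he hh.symm
  have hf2 : ∀ k τ, lam (f k) + S (f k) k ≤ lam τ + S τ k := by
    intro k τ
    show lam (if σ₀⁻¹ k = τ₁ k then τ₂ k else τ₁ k) +
      S (if σ₀⁻¹ k = τ₁ k then τ₂ k else τ₁ k) k ≤ lam τ + S τ k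
    rcases eq_or_ne (σ₀⁻¹ k) (τ₁ k) with he | he
    · rw [if_pos he]; exact hτ2 k τ
    · rw [if_neg he]; exact hτ1 k τ
  set g : Fin r → Fin r := fun k => σ₀ (f k) with hgdef
  have hg : ∀ k, g k ≠ k := by
    intro k hk
    have hk' : σ₀ (f k) = k := hk
    have h2 : σ₀ (f k) = σ₀ (σ₀⁻¹ k) := by rw [hk', permApplyInvSelf]
    exact hf1 k (σ₀.injective h2)
  -- find a periodic point
  set x₀ : Fin r := ⟨0, hr⟩ with hx₀
  obtain ⟨i, j, hij, hEq⟩ := Fintype.exists_ne_map_eq_of_card_lt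
    (fun i : Fin (r+1) => g^[(i : ℕ)] x₀) (by simp)
  -- wlog i < j
  have hkey : ∃ a : Fin r, ∃ q : ℕ, 0 < q ∧ g^[q] a = a := by
    rcases lt_or_gt_of_ne (fun hh : (i : ℕ) = (j : ℕ) => hij (Fin.ext hh)) with hlt | hlt
    · refine ⟨g^[(i:ℕ)] x₀, (j : ℕ) - i, by omega, ?_⟩
      rw [← Function.iterate_add_apply]
      rw [show (j : ℕ) - i + i = j by omega]
      exact hEq.symm
    · refine ⟨g^[(j:ℕ)] x₀, (i : ℕ) - j, by omega, ?_⟩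
      rw [← Function.iterate_add_apply]
      rw [show (i : ℕ) - j + j = i by omega]
      exact hEq
  obtain ⟨a, q, hq, hqa⟩ := hkey
  have hfind : ∃ p, 0 < p ∧ g^[p] a = a := ⟨q, hq, hqa⟩
  set p := Nat.find hfind with hpdef
  obtain ⟨hppos, hpa⟩ : 0 < p ∧ g^[p] a = a := Nat.find_spec hfind
  have hpmin : ∀ m, m < p → ¬(0 < m ∧ g^[m] a = a) := fun m hm => Nat.find_min hfind hm
  have hp1 : p ≠ 1 := by
    intro h1
    apply hg a
    have h2 := hpa
    rw [h1] at h2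
    simpa using h2
  have hp2 : 2 ≤ p := by omega
  have hinj_lt : ∀ s t, s < p → t < p → g^[s] a = g^[t] a → s = t := by
    have key : ∀ s t, s < t → t < p → g^[s] a ≠ g^[t] a := by
      intro s t hst htp hEq2
      have h1 : g^[p - t + s] a = a := by
        have : g^[p - t] (g^[s] a) = g^[p - t] (g^[t] a) := by rw [hEq2]
        rw [← Function.iterate_add_apply, ← Function.iterate_add_apply] at this
        rw [show p - t + t = p by omega] at this
        rw [this, hpa]
      exact hpmin (p - t + s) (by omega) ⟨by omega, h1⟩
    intro s t hs ht hEq2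
    rcases lt_trichotomy s t with hh | hh | hh
    · exact absurd hEq2 (key s t hh ht)
    · exact hh
    · exact absurd hEq2.symm (key t s hh hs)
  set l : List (Fin r) := (List.range p).map (fun s => g^[s] a) with hldef
  have hlen : l.length = p := by simp [hldef]
  have hnodup : l.Nodup := by
    rw [hldef]
    refine List.Nodup.map_on ?_ (List.nodup_range ..)
    intro s hs t ht hEq2
    rw [List.mem_range] at hs ht
    exact hinj_lt s t hs ht hEq2
  have hmem : ∀ x, x ∈ l ↔ ∃ s, s < p ∧ g^[s] a = x := by
    intro x
    simp [hldef, List.mem_map, List.mem_range]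
    constructor
    · rintro ⟨s, hs, rfl⟩; exact ⟨s, hs, rfl⟩
    · rintro ⟨s, hs, rfl⟩; exact ⟨s, hs, rfl⟩
  have hal : a ∈ l := (hmem a).mpr ⟨0, by omega, rfl⟩
  set e₀ := l.formPerm with he₀
  have hform : ∀ x ∈ l, e₀ x = g x := by
    intro x hx
    obtain ⟨s, hsp, rfl⟩ := (hmem x).mp hx
    have hsl : s < l.length := by rw [hlen]; exact hsp
    have hx_get : l[s] = g^[s] a := by
      simp [hldef]
    have hiter : g (g^[s] a) = g^[s+1] a := by
      rw [show s + 1 = 1 + s by omega, Function.iterate_add_apply]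
      simp
    have hthis := List.formPerm_apply_getElem l hnodup s hsl
    rw [hx_get] at hthis
    have hgoal : e₀ (g^[s] a) = l[(s + 1) % l.length]'(Nat.mod_lt _ (by omega)) := hthis
    rw [hgoal]
    have hmod : l[(s + 1) % l.length]'(Nat.mod_lt _ (by omega)) =
        g^[(s + 1) % p] a := by
      simp [hldef, hlen]
    rw [hmod, hiter]
    rcases eq_or_ne (s + 1) p with hsp1 | hsp1
    · rw [hsp1, Nat.mod_self]
      simp only [Function.iterate_zero, id_eq]
      exact hpa.symm
    · rw [Nat.mod_eq_of_lt (by omega)]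
  have hfix : ∀ x, x ∉ l → e₀ x = x := fun x hx => List.formPerm_apply_of_notMem hx
  have hmapsg : ∀ x ∈ l, g x ∈ l := by
    intro x hx
    obtain ⟨s, hsp, rfl⟩ := (hmem x).mp hx
    have hiter : g (g^[s] a) = g^[s+1] a := by
      rw [show s + 1 = 1 + s by omega, Function.iterate_add_apply]
      simp
    rcases eq_or_ne (s + 1) p with hsp1 | hsp1
    · refine (hmem _).mpr ⟨0, by omega, ?_⟩
      simp only [Function.iterate_zero, id_eq]
      rw [hiter, hsp1, hpa]
    · refine (hmem _).mpr ⟨s + 1, by omega, ?_⟩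
      rw [hiter]
  have hmapse : ∀ x ∈ l, e₀ x ∈ l := by
    intro x hx; rw [hform x hx]; exact hmapsg x hx
  have hinvC : ∀ x ∈ l, e₀⁻¹ x ∈ l := by
    intro x hx
    by_contra hy
    have : e₀ (e₀⁻¹ x) = e₀⁻¹ x := hfix _ hy
    rw [permApplyInvSelf] at this
    exact hy (this ▸ hx)
  have hinvfix : ∀ x, x ∉ l → e₀⁻¹ x = x := by
    intro x hx
    have : e₀ x = x := hfix x hx
    calc e₀⁻¹ x = e₀⁻¹ (e₀ x) := by rw [this]
    _ = x := permInvApplySelf _ _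
  -- the competing permutation
  set σ' : Equiv.Perm (Fin r) := e₀⁻¹ * σ₀ with hσ'def
  have hσ'app : ∀ u, σ' u = e₀⁻¹ (σ₀ u) := fun u => rfl
  -- sums
  set S' : Matrix (Fin r) (Fin r) ℝ := fun i k => lam i + S i k with hS'def
  have hshift : ∀ π : Equiv.Perm (Fin r),
      (∑ u, S' u (π u)) = (∑ u, lam u) + ∑ u, S u (π u) := by
    intro π
    rw [← Finset.sum_add_distrib]
  have hsum1 : (∑ u, S' u (σ' u)) = ∑ k, S' (σ₀⁻¹ k) (e₀⁻¹ k) := by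
    rw [← Equiv.sum_comp σ₀ (fun k => S' (σ₀⁻¹ k) (e₀⁻¹ k))]
    refine Finset.sum_congr rfl (fun u _ => ?_)
    simp [hσ'app]
  have hsum2 : (∑ u, S' u (σ₀ u)) = ∑ k, S' (σ₀⁻¹ k) k := by
    rw [← Equiv.sum_comp σ₀ (fun k => S' (σ₀⁻¹ k) k)]
    refine Finset.sum_congr rfl (fun u _ => ?_)
    simp
  set C : Finset (Fin r) := l.toFinset with hCdef
  have hmemC : ∀ x, x ∈ C ↔ x ∈ l := by intro x; simp [hCdef]
  have hsplit1 : (∑ k, S' (σ₀⁻¹ k) (e₀⁻¹ k)) =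
      (∑ k ∈ C, S' (σ₀⁻¹ k) (e₀⁻¹ k)) + ∑ k ∈ Finset.univ \ C, S' (σ₀⁻¹ k) (e₀⁻¹ k) := by
    rw [Finset.sum_sdiff_eq_sub (subset_univ C)]
    ring
  have hsplit2 : (∑ k, S' (σ₀⁻¹ k) k) =
      (∑ k ∈ C, S' (σ₀⁻¹ k) k) + ∑ k ∈ Finset.univ \ C, S' (σ₀⁻¹ k) k := by
    rw [Finset.sum_sdiff_eq_sub (subset_univ C)]
    ring
  have hoff : ∀ k ∈ Finset.univ \ C, S' (σ₀⁻¹ k) (e₀⁻¹ k) = S' (σ₀⁻¹ k) k := by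
    intro k hk
    rw [Finset.mem_sdiff] at hk
    rw [hinvfix k (fun hh => hk.2 ((hmemC k).mpr hh))]
  have honC : (∑ k ∈ C, S' (σ₀⁻¹ k) (e₀⁻¹ k)) = ∑ x ∈ C, S' (f x) x := by
    refine Finset.sum_nbij' (i := fun k => e₀⁻¹ k) (j := fun x => e₀ x) ?_ ?_ ?_ ?_ ?_
    · intro k hk
      exact (hmemC _).mpr (hinvC k ((hmemC k).mp hk))
    · intro x hx
      exact (hmemC _).mpr (hmapse x ((hmemC x).mp hx))
    · intro k _; simp
    · intro x _; simp
    · intro k hk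
      have hk' : e₀⁻¹ k ∈ l := hinvC k ((hmemC k).mp hk)
      have hgk : e₀ (e₀⁻¹ k) = g (e₀⁻¹ k) := hform _ hk'
      rw [permApplyInvSelf] at hgk
      have hgk' : k = σ₀ (f (e₀⁻¹ k)) := hgk
      have hfk : σ₀⁻¹ k = f (e₀⁻¹ k) := by
        apply σ₀.injective
        rw [permApplyInvSelf]
        exact hgk'
      exact congrArg (fun z => S' z (e₀⁻¹ k)) hfk
  have honC_le : (∑ x ∈ C, S' (f x) x) ≤ ∑ k ∈ C, S' (σ₀⁻¹ k) k := by
    refine Finset.sum_le_sum (fun x _ => ?_)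
    exact hf2 x (σ₀⁻¹ x)
  have hsumle : (∑ u, S u (σ' u)) ≤ ∑ u, S u (σ₀ u) := by
    have h1 : (∑ u, S' u (σ' u)) ≤ ∑ u, S' u (σ₀ u) := by
      rw [hsum1, hsum2, hsplit1, hsplit2, honC]
      refine add_le_add honC_le (le_of_eq ?_)
      exact Finset.sum_congr rfl hoff
    have h2 := hshift σ'
    have h3 := hshift σ₀
    linarith
  have hstar : ∀ τ : Equiv.Perm (Fin r), (∑ u, S u (σ' u)) ≤ ∑ u, S u (τ u) :=
    fun τ => le_trans hsumle (hσ₀ τ)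
  have heqperm : σ' = σ₀ := huniq σ' hstar
  -- contradiction at a
  have hlast : e₀⁻¹ a = g^[p-1] a := by
    have hmem' : g^[p-1] a ∈ l := (hmem _).mpr ⟨p-1, by omega, rfl⟩
    have : e₀ (g^[p-1] a) = g (g^[p-1] a) := hform _ hmem'
    have h2 : g (g^[p-1] a) = a := by
      have : g^[1 + (p-1)] a = g (g^[p-1] a) := Function.iterate_add_apply g 1 (p-1) a
      rw [show 1 + (p-1) = p by omega] at this
      rw [← this, hpa]
    rw [h2] at this
    calc e₀⁻¹ a = e₀⁻¹ (e₀ (g^[p-1] a)) := by rw [this]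
    _ = g^[p-1] a := permInvApplySelf _ _
  have hne_a : e₀⁻¹ a ≠ a := by
    rw [hlast]
    intro hh
    have : p - 1 = 0 := hinj_lt (p-1) 0 (by omega) (by omega) (by simpa using hh)
    omega
  apply hne_a
  have h8 : σ' (σ₀⁻¹ a) = σ₀ (σ₀⁻¹ a) := by rw [heqperm]
  have h9 : e₀⁻¹ (σ₀ (σ₀⁻¹ a)) = σ₀ (σ₀⁻¹ a) := h8
  rw [permApplyInvSelf] at h9
  exact h9

end Cycle
section Convert

open Finset

lemma realize_to_ties {r : ℕ} (hr : 0 < r) (S : Matrix (Fin r) (Fin r) ℝ)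
    (lam : Fin r → WithTop ℝ) (hne : ∃ τ, lam τ ≠ ⊤)
    (h : ∀ k : Fin r, ∃ τ₁ τ₂ : Fin r, τ₁ ≠ τ₂ ∧
      (∀ τ, lam τ₁ + (S τ₁ k : WithTop ℝ) ≤ lam τ + (S τ k : WithTop ℝ)) ∧
      (∀ τ, lam τ₂ + (S τ₂ k : WithTop ℝ) ≤ lam τ + (S τ k : WithTop ℝ))) :
    ∃ lam' : Fin r → ℝ, ∀ k : Fin r, ∃ τ₁ τ₂ : Fin r, τ₁ ≠ τ₂ ∧
      (∀ τ, lam' τ₁ + S τ₁ k ≤ lam' τ + S τ k) ∧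
      (∀ τ, lam' τ₂ + S τ₂ k ≤ lam' τ + S τ k) := by
  classical
  have : Nonempty (Fin r) := ⟨⟨0, hr⟩⟩
  obtain ⟨τ₀, hτ₀⟩ := hne
  choose t₁ t₂ htne h1 h2 using h
  have hfin : ∀ k, lam (t₁ k) ≠ ⊤ ∧ lam (t₂ k) ≠ ⊤ := by
    intro k
    have hτ₀fin : lam τ₀ + (S τ₀ k : WithTop ℝ) ≠ ⊤ :=
      WithTop.add_ne_top.mpr ⟨hτ₀, WithTop.coe_ne_top⟩
    constructor
    · have := h1 k τ₀
      intro hh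
      rw [hh] at this
      simp only [top_add] at this
      exact hτ₀fin (top_le_iff.mp this)
    · have := h2 k τ₀
      intro hh
      rw [hh] at this
      simp only [top_add] at this
      exact hτ₀fin (top_le_iff.mp this)
  set rT : Fin r → ℝ := fun τ => WithTop.untopD 0 (lam τ) with hrT
  have hcoe : ∀ τ, lam τ ≠ ⊤ → lam τ = ((rT τ : ℝ) : WithTop ℝ) := by
    intro τ hτ
    cases' hlam : lam τ with x
    · exact absurd hlam hτ
    · rw [hrT]; simp [hlam]
  set v : Fin r → ℝ := fun k => rT (t₁ k) + S (t₁ k) k with hv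
  set L : ℝ := 1 + (univ : Finset (Fin r × Fin r)).sup'
    (by exact univ_nonempty) (fun p => v p.1 - S p.2 p.1) with hL
  set lam' : Fin r → ℝ := fun τ => if lam τ = ⊤ then L else rT τ with hlam'
  have hlam'fin : ∀ τ, lam τ ≠ ⊤ → lam' τ = rT τ := by
    intro τ hτ; rw [hlam']; simp [hτ]
  have hlam'top : ∀ τ, lam τ = ⊤ → lam' τ = L := by
    intro τ hτ; rw [hlam']; simp [hτ]
  refine ⟨lam', fun k => ⟨t₁ k, t₂ k, htne k, ?_, ?_⟩⟩
  · intro τ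
    have hL1 : lam' (t₁ k) = rT (t₁ k) := hlam'fin _ (hfin k).1
    rw [hL1]
    by_cases hτ : lam τ = ⊤
    · rw [hlam'top τ hτ]
      have hsup : v k - S τ k ≤ (univ : Finset (Fin r × Fin r)).sup'
          (by exact univ_nonempty) (fun p => v p.1 - S p.2 p.1) :=
        Finset.le_sup' (fun p : Fin r × Fin r => v p.1 - S p.2 p.1)
          (mem_univ (⟨k, τ⟩ : Fin r × Fin r))
      have : v k ≤ L + S τ k := by rw [hL]; linarith
      simpa [hv] using this
    · rw [hlam'fin τ hτ]
      have := h1 k τ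
      rw [hcoe _ (hfin k).1, hcoe _ hτ] at this
      rw [← WithTop.coe_add, ← WithTop.coe_add, WithTop.coe_le_coe] at this
      exact this
  · intro τ
    have hL2 : lam' (t₂ k) = rT (t₂ k) := hlam'fin _ (hfin k).2
    rw [hL2]
    by_cases hτ : lam τ = ⊤
    · rw [hlam'top τ hτ]
      have hle2 := h2 k (t₁ k)
      rw [hcoe _ (hfin k).1, hcoe _ (hfin k).2] at hle2
      rw [← WithTop.coe_add, ← WithTop.coe_add, WithTop.coe_le_coe] at hle2
      have hsup : v k - S τ k ≤ (univ : Finset (Fin r × Fin r)).sup'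
          (by exact univ_nonempty) (fun p => v p.1 - S p.2 p.1) :=
        Finset.le_sup' (fun p : Fin r × Fin r => v p.1 - S p.2 p.1)
          (mem_univ (⟨k, τ⟩ : Fin r × Fin r))
      have hvk : v k ≤ L + S τ k := by rw [hL]; linarith
      have : rT (t₁ k) + S (t₁ k) k ≤ L + S τ k := by simpa [hv] using hvk
      linarith
    · rw [hlam'fin τ hτ]
      have := h2 k τ
      rw [hcoe _ (hfin k).2, hcoe _ hτ] at this
      rw [← WithTop.coe_add, ← WithTop.coe_add, WithTop.coe_le_coe] at this
      exact this

end Convert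

section Main

open Finset

theorem tropRank_eq_max_indep_rows (m n : ℕ) (A : Matrix (Fin m) (Fin n) ℝ) :
    tropRank A = sSup {c : ℕ | ∃ ρ : Fin c → Fin m, Function.Injective ρ ∧
      ¬ ∃ lam : Fin c → WithTop ℝ, Realizes lam (A.submatrix ρ id)} := by
  have hset : {r : ℕ | ∃ (ρ : Fin r → Fin m) (c : Fin r → Fin n),
      Function.Injective ρ ∧ Function.Injective c ∧ TropNonsing (A.submatrix ρ c)} =
      {c : ℕ | ∃ ρ : Fin c → Fin m, Function.Injective ρ ∧
      ¬ ∃ lam : Fin c → WithTop ℝ, Realizes lam (A.submatrix ρ id)} := by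
    ext r
    simp only [Set.mem_setOf_eq]
    constructor
    · rintro ⟨ρ, γ, hρ, hγ, hns⟩
      refine ⟨ρ, hρ, ?_⟩
      rintro ⟨lam, hne, hcols⟩
      rcases Nat.eq_zero_or_pos r with rfl | hr
      · obtain ⟨τ, -⟩ := hne
        exact τ.elim0
      · have hties : ∀ k : Fin r, ∃ τ₁ τ₂ : Fin r, τ₁ ≠ τ₂ ∧
            (∀ τ, lam τ₁ + ((A.submatrix ρ γ) τ₁ k : WithTop ℝ) ≤
              lam τ + ((A.submatrix ρ γ) τ k : WithTop ℝ)) ∧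
            (∀ τ, lam τ₂ + ((A.submatrix ρ γ) τ₂ k : WithTop ℝ) ≤
              lam τ + ((A.submatrix ρ γ) τ k : WithTop ℝ)) := by
          intro k
          exact hcols (γ k)
        obtain ⟨lam', hlam'⟩ := realize_to_ties hr (A.submatrix ρ γ) lam hne hties
        exact not_nonsing_of_ties hr (A.submatrix ρ γ) lam' hlam' hns
    · rintro ⟨ρ, hρ, hno⟩
      rcases Nat.eq_zero_or_pos r with rfl | hr
      · refine ⟨Fin.elim0, Fin.elim0, fun a b h => a.elim0, fun a b h => a.elim0,
          ⟨1, fun τ => ?_, fun y hy => ?_⟩⟩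
        · simp
        · exact Equiv.ext fun x => x.elim0
      · by_cases hnr : r ≤ n
        · by_contra hcon
          push_neg at hcon
          apply hno
          have hsub : ∀ G : Finset (Fin n), G.card = r →
              ∃ lam : Fin r → ℝ, ∀ k ∈ G, ColTies ((fun k i => A (ρ i) k) k) lam := by
            intro G hG
            set e := G.orderIsoOfFin hG with he
            set γ : Fin r → Fin n := fun s => ((e s : { x // x ∈ G }) : Fin n) with hγ
            have hγinj : Function.Injective γ := by
              intro a b hab
              exact e.injective (Subtype.ext hab)
            have hnsG : ¬ TropNonsing (A.submatrix ρ γ) := by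
              intro hns
              exact hcon ρ γ hρ hγinj hns
            obtain ⟨lam, hlam⟩ := square_ties (A.submatrix ρ γ) hnsG
            refine ⟨lam, fun k hk => ?_⟩
            have hks : γ (e.symm ⟨k, hk⟩) = k := by
              rw [hγ]
              simp
            rw [← hks]
            exact hlam (e.symm ⟨k, hk⟩)
          obtain ⟨lam, hlam⟩ := helly hr (fun k i => A (ρ i) k) hnr hsub
          refine ⟨fun τ => ((lam τ : ℝ) : WithTop ℝ), ⟨⟨0, hr⟩, WithTop.coe_ne_top⟩,
            fun k => ?_⟩
          obtain ⟨τ₁, τ₂, hτne, h1, h2⟩ := hlam k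
          refine ⟨τ₁, τ₂, hτne, fun τ => ?_, fun τ => ?_⟩
          · show (lam τ₁ : WithTop ℝ) + ((A (ρ τ₁) k : ℝ) : WithTop ℝ) ≤
              (lam τ : WithTop ℝ) + ((A (ρ τ) k : ℝ) : WithTop ℝ)
            exact_mod_cast h1 τ
          · show (lam τ₂ : WithTop ℝ) + ((A (ρ τ₂) k : ℝ) : WithTop ℝ) ≤
              (lam τ : WithTop ℝ) + ((A (ρ τ) k : ℝ) : WithTop ℝ)
            exact_mod_cast h2 τ
        · exfalso
          apply hno
          push_neg at hnr
          have hle : n + 1 ≤ r := by omega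
          set X : Matrix (Fin n) (Fin (n+1)) ℝ :=
            fun i t => A (ρ (Fin.castLE hle t)) i with hX
          set lam : Fin r → WithTop ℝ := fun τ =>
            if h : (τ : ℕ) < n + 1 then ((muCR X ⟨τ, h⟩ : ℝ) : WithTop ℝ) else ⊤ with hlam
          have hlamval : ∀ t : Fin (n+1), lam (Fin.castLE hle t) = ((muCR X t : ℝ) : WithTop ℝ) := by
            intro t
            have hlt : ((Fin.castLE hle t : Fin r) : ℕ) < n + 1 := t.isLt
            show (if h : ((Fin.castLE hle t : Fin r) : ℕ) < n + 1
              then ((muCR X ⟨((Fin.castLE hle t : Fin r) : ℕ), h⟩ : ℝ) : WithTop ℝ)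
              else ⊤) = ((muCR X t : ℝ) : WithTop ℝ)
            rw [dif_pos hlt]
            have ht : (⟨((Fin.castLE hle t : Fin r) : ℕ), hlt⟩ : Fin (n+1)) = t := Fin.ext rfl
            rw [ht]
          refine ⟨lam, ⟨Fin.castLE hle 0, ?_⟩, fun k => ?_⟩
          · rw [hlamval 0]
            exact WithTop.coe_ne_top
          · obtain ⟨t₁, t₂, htne, h1, h2⟩ := cramer_ties X k
            have hineq : ∀ (t : Fin (n+1)) (ht : ∀ s, muCR X t + X k t ≤ muCR X s + X k s)
                (τ : Fin r), lam (Fin.castLE hle t) +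
                  ((A.submatrix ρ id) (Fin.castLE hle t) k : WithTop ℝ) ≤
                  lam τ + ((A.submatrix ρ id) τ k : WithTop ℝ) := by
              intro t ht τ
              rw [hlamval t]
              by_cases hτ : (τ : ℕ) < n + 1
              · have hτeq : τ = Fin.castLE hle ⟨(τ : ℕ), hτ⟩ := by
                  apply Fin.ext
                  rfl
                rw [hτeq, hlamval]
                exact_mod_cast ht ⟨(τ : ℕ), hτ⟩
              · have : lam τ = ⊤ := by rw [hlam]; exact dif_neg hτ
                rw [this, top_add]
                exact le_top
            refine ⟨Fin.castLE hle t₁, Fin.castLE hle t₂, ?_, hineq t₁ h1, hineq t₂ h2⟩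
            intro hh
            apply htne
            have hvv : (t₁ : ℕ) = (t₂ : ℕ) := congrArg (Fin.val : Fin r → ℕ) hh
            exact Fin.ext hvv
  rw [tropRank, hset]

end Main

end
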